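/- Let m>0 and ω∈ℝ with ω≠0 and |ω|≠m, and let k(z)=√(z²−m²) be the branch with Im k(z)>0 for Im z>0. Then lim_{ε→0+} ε·∫_ℝ(|∂_x e^{ik(ω+iε)|x|}|² + m²|e^{ik(ω+iε)|x|}|²)dx = n(ω), where n(ω)=|ω|·√(ω²−m²) if |ω|>m and n(ω)=0 if |ω|<m. -/

import Mathlib

open MeasureTheory Filter
open scoped ENNReal Topology

noncomputable section

/-- The branch `k(z) = √(z²−m²)` with `Im k(z) > 0` for `Im z > 0`, realized as
`k(z) = i(m²−z²)^{1/2}` with the principal power. -/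
def kBr (m : ℝ) (z : ℂ) : ℂ := Complex.I * (((m:ℂ)^2 - z^2) ^ ((1:ℂ)/2))

lemma my_integral_exp_neg_abs_mul {c : ℝ} (hc : 0 < c) :
    ∫ x : ℝ, Real.exp (-(c * |x|)) = 2 * c⁻¹ := by
  rw [integral_comp_abs (f := fun t => Real.exp (-(c * t)))]
  have h1 := integral_comp_mul_left_Ioi (fun t => Real.exp (-t)) 0 hc
  rw [mul_zero, integral_exp_neg_Ioi_zero] at h1
  rw [h1]; simp

lemma my_w_re_pos {ζ : ℂ} (him : ζ.im ≠ 0) : 0 < (ζ ^ ((1:ℂ)/2)).re := by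
  have hζ : ζ ≠ 0 := fun h => him (by simp [h])
  rw [Complex.cpow_def_of_ne_zero hζ, Complex.exp_re]
  apply mul_pos (Real.exp_pos _)
  have h2 : (Complex.log ζ * (1/2)).im = ζ.arg / 2 := by
    simp [Complex.mul_im, Complex.log_im]; ring
  rw [h2]
  apply Real.cos_pos_of_mem_Ioo
  constructor
  · have := Complex.neg_pi_lt_arg ζ; simp; linarith
  · have h1 := Complex.arg_le_pi ζ
    have h3 : ζ.arg ≠ Real.pi := fun h => him (Complex.arg_eq_pi_iff.mp h).2
    have := lt_of_le_of_ne h1 h3; linarith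

lemma my_w_sq (ζ : ℂ) : (ζ ^ ((1:ℂ)/2))^2 = ζ := by
  rw [one_div]; exact Complex.cpow_ofNat_inv_pow ζ 2

lemma my_key (m ω : ℝ) (hω : ω ≠ 0) {ε : ℝ} (hε : 0 < ε) :
    ε * ∫ x : ℝ,
        (‖Complex.I * kBr m ((ω : ℂ) + Complex.I * (ε : ℂ)) * ((Real.sign x : ℝ) : ℂ)
            * Complex.exp (Complex.I * kBr m ((ω : ℂ) + Complex.I * (ε : ℂ))
                * ((|x| : ℝ) : ℂ))‖^2
          + m^2 * ‖Complex.exp (Complex.I * kBr m ((ω : ℂ) + Complex.I * (ε : ℂ))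
                * ((|x| : ℝ) : ℂ))‖^2)
      = (Real.sqrt ((m^2-ω^2+ε^2)^2 + 4*ω^2*ε^2) + m^2)
        * Real.sqrt (Real.sqrt ((m^2-ω^2+ε^2)^2 + 4*ω^2*ε^2) - (m^2-ω^2+ε^2))
        / (|ω| * Real.sqrt 2) := by
  set A : ℝ := m^2-ω^2+ε^2 with hAdef
  set S : ℝ := Real.sqrt (A^2 + 4*ω^2*ε^2) with hSdef
  set z : ℂ := (ω : ℂ) + Complex.I * (ε : ℂ) with hzdef
  set ζ : ℂ := (m:ℂ)^2 - z^2 with hζdef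
  set w : ℂ := ζ ^ ((1:ℂ)/2) with hwdef
  set b : ℝ := w.re with hbdef
  have hζre : ζ.re = A := by
    simp [hζdef, hzdef, hAdef, pow_two, Complex.mul_re]; ring
  have hζim : ζ.im = -(2*ω*ε) := by
    simp [hζdef, hzdef, pow_two, Complex.mul_im]; ring
  have hζim0 : ζ.im ≠ 0 := by
    rw [hζim]; intro h
    rcases mul_eq_zero.mp (neg_eq_zero.mp h) with h' | h'
    · exact hω (by rcases mul_eq_zero.mp h' with h'' | h'' <;> [norm_num at h''; exact h''])
    · exact hε.ne' h'
  have hb : 0 < b := my_w_re_pos hζim0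
  have hw2 : w^2 = ζ := my_w_sq ζ
  have hA : b^2 - w.im^2 = A := by
    have := congrArg Complex.re hw2
    rw [hζre] at this
    simpa [pow_two, Complex.mul_re] using this
  have hS : b^2 + w.im^2 = S := by
    have h1 : ‖w‖^2 = ‖ζ‖ := by
      rw [← norm_pow, hw2]
    have h2 : ‖ζ‖ = S := by
      rw [Complex.norm_def, Complex.normSq_apply, hζre, hζim, hSdef]
      congr 1; ring
    rw [← h2, ← h1, Complex.sq_norm, Complex.normSq_apply, hbdef, pow_two, pow_two]
  -- the kBr relation
  have hk : Complex.I * kBr m z = -w := by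
    rw [kBr, ← mul_assoc, Complex.I_mul_I, hwdef, hζdef, neg_one_mul]
  -- integrand rewrite
  have hint : ∀ x : ℝ, x ≠ 0 →
      (‖Complex.I * kBr m z * ((Real.sign x : ℝ) : ℂ)
            * Complex.exp (Complex.I * kBr m z * ((|x| : ℝ) : ℂ))‖^2
          + m^2 * ‖Complex.exp (Complex.I * kBr m z * ((|x| : ℝ) : ℂ))‖^2)
      = (S + m^2) * Real.exp (-(2*b * |x|)) := by
    intro x hx
    rw [hk]
    have hsgn : |Real.sign x| = 1 := by
      rcases lt_or_gt_of_ne hx with h | h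
      · rw [Real.sign_of_neg h]; norm_num
      · rw [Real.sign_of_pos h]; norm_num
    have hexp : ‖Complex.exp (-w * ((|x| : ℝ) : ℂ))‖ = Real.exp (-(b * |x|)) := by
      rw [Complex.norm_exp]
      congr 1
      simp [Complex.mul_re, hbdef]
    rw [norm_mul, norm_mul, hexp,
      norm_neg, Complex.norm_real, Real.norm_eq_abs, hsgn]
    have habsw : ‖w‖^2 = S := by
      rw [Complex.sq_norm, Complex.normSq_apply, ← hS]; ring
    have hexp2 : Real.exp (-(b * |x|)) ^ 2 = Real.exp (-(2*b*|x|)) := by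
      rw [← Real.exp_nat_mul]; congr 1; push_cast; ring
    rw [mul_pow, mul_pow, habsw, hexp2]
    ring
  -- ae rewrite and integral
  have hae : (fun x : ℝ =>
      (‖Complex.I * kBr m z * ((Real.sign x : ℝ) : ℂ)
            * Complex.exp (Complex.I * kBr m z * ((|x| : ℝ) : ℂ))‖^2
          + m^2 * ‖Complex.exp (Complex.I * kBr m z * ((|x| : ℝ) : ℂ))‖^2))
      =ᵐ[volume] (fun x : ℝ => (S + m^2) * Real.exp (-(2*b * |x|))) := by
    have h0 : ∀ᵐ x : ℝ, x ≠ 0 := by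
      rw [ae_iff]
      simp
    filter_upwards [h0] with x hx
    exact hint x hx
  rw [integral_congr_ae hae, MeasureTheory.integral_const_mul,
    my_integral_exp_neg_abs_mul (by linarith : (0:ℝ) < 2*b)]
  -- algebra
  have hS2 : S^2 = A^2 + 4*ω^2*ε^2 := Real.sq_sqrt (by positivity)
  have hSA : 0 ≤ S - A := by nlinarith [sq_nonneg w.im]
  have hkey : b * Real.sqrt (S - A) = Real.sqrt 2 * |ω| * ε := by
    have h1 : (b * Real.sqrt (S - A))^2 = (Real.sqrt 2 * |ω| * ε)^2 := by
      rw [mul_pow, mul_pow, mul_pow, Real.sq_sqrt hSA, Real.sq_sqrt (by norm_num : (0:ℝ) ≤ 2),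
        sq_abs]
      linear_combination ((S-A)/2)*hA + ((S-A)/2)*hS + (1/2)*hS2
    have h2 : 0 ≤ b * Real.sqrt (S - A) := by positivity
    have h3 : 0 ≤ Real.sqrt 2 * |ω| * ε := by positivity
    calc b * Real.sqrt (S - A) = Real.sqrt ((b * Real.sqrt (S - A))^2) := (Real.sqrt_sq h2).symm
      _ = Real.sqrt ((Real.sqrt 2 * |ω| * ε)^2) := by rw [h1]
      _ = Real.sqrt 2 * |ω| * ε := Real.sqrt_sq h3
  have hω' : (0:ℝ) < |ω| := abs_pos.mpr hω
  have hs2 : (0:ℝ) < Real.sqrt 2 := by positivity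
  have hsqrt : Real.sqrt (S - A) = Real.sqrt 2 * |ω| * ε / b := by
    rw [eq_div_iff hb.ne']
    linarith [hkey]
  rw [hsqrt]
  field_simp
/-- `lim_{ε→0+} ε‖e^{ik(ω+iε)|x|}‖²_{H¹} = n(ω)`, where `n(ω)=|ω|√(ω²−m²)`
for `|ω|>m` and `n(ω)=0` for `|ω|<m`. -/
theorem weighted_H1_norm_limit
    (m : ℝ) (hm : 0 < m) (ω : ℝ) (hω : ω ≠ 0) (hωm : |ω| ≠ m) :
    Tendsto (fun ε : ℝ => ε * ∫ x : ℝ,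
        (‖Complex.I * kBr m ((ω : ℂ) + Complex.I * (ε : ℂ)) * ((Real.sign x : ℝ) : ℂ)
            * Complex.exp (Complex.I * kBr m ((ω : ℂ) + Complex.I * (ε : ℂ))
                * ((|x| : ℝ) : ℂ))‖^2
          + m^2 * ‖Complex.exp (Complex.I * kBr m ((ω : ℂ) + Complex.I * (ε : ℂ))
                * ((|x| : ℝ) : ℂ))‖^2))
      (𝓝[>] (0:ℝ))
      (𝓝 (if m < |ω| then |ω| * Real.sqrt (ω^2 - m^2) else 0)) := by
  set F : ℝ → ℝ := fun ε =>
    (Real.sqrt ((m^2-ω^2+ε^2)^2 + 4*ω^2*ε^2) + m^2)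
      * Real.sqrt (Real.sqrt ((m^2-ω^2+ε^2)^2 + 4*ω^2*ε^2) - (m^2-ω^2+ε^2))
      / (|ω| * Real.sqrt 2) with hFdef
  have hcont : Continuous F := by
    apply Continuous.div_const
    apply Continuous.mul
    · exact (Real.continuous_sqrt.comp (by continuity)).add continuous_const
    · exact Real.continuous_sqrt.comp
        ((Real.continuous_sqrt.comp (by continuity)).sub (by continuity))
  have hω' : (0:ℝ) < |ω| := abs_pos.mpr hω
  have hF0 : F 0 = (if m < |ω| then |ω| * Real.sqrt (ω^2 - m^2) else 0) := by
    rw [hFdef]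
    simp only [ne_eq, OfNat.ofNat_ne_zero, not_false_eq_true, zero_pow, mul_zero, add_zero]
    rw [Real.sqrt_sq_eq_abs]
    by_cases h : m < |ω|
    · rw [if_pos h]
      have h2 : m^2 < ω^2 := by
        have := sq_abs ω
        nlinarith [hm]
      rw [abs_of_nonpos (by linarith : m^2-ω^2 ≤ 0)]
      rw [show -(m^2-ω^2) - (m^2-ω^2) = 2*(ω^2-m^2) by ring]
      rw [Real.sqrt_mul (by norm_num) (ω^2-m^2)]
      have hωsq : -(m^2-ω^2) + m^2 = |ω| * |ω| := by
        rw [← sq_abs ω]; ring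
      rw [hωsq]
      have hs2 : (0:ℝ) < Real.sqrt 2 := by positivity
      field_simp
    · rw [if_neg h]
      have h2 : ω^2 < m^2 := by
        have h3 : |ω| < m := lt_of_le_of_ne (not_lt.mp h) hωm
        nlinarith [abs_nonneg ω, sq_abs ω]
      rw [abs_of_nonneg (by nlinarith : (0:ℝ) ≤ m^2-ω^2)]
      rw [show m^2-ω^2 - (m^2-ω^2) = 0 by ring, Real.sqrt_zero, mul_zero, zero_div]
  have htF : Tendsto F (𝓝[>] (0:ℝ)) (𝓝 (if m < |ω| then |ω| * Real.sqrt (ω^2 - m^2) else 0)) := by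
    rw [← hF0]
    exact (hcont.tendsto 0).mono_left nhdsWithin_le_nhds
  refine htF.congr' ?_
  filter_upwards [self_mem_nhdsWithin] with ε hε
  exact (my_key m ω hω hε).symm
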